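/- Let C be a chord-less r-cycle (r ≥ 4) with vertex set V(C) = {v_1,...,v_r}, and let Γ be the simplicial complex whose facets are V(C) \ {v_i, v_j} for each pair {v_i, v_j} of non-adjacent vertices of C (i.e., edges of the complement of C). Then Γ is a pure (r-3)-dimensional complex, every subset of V(C) of cardinality at most r-3 is a face of Γ, Γ has exactly r(r-3)/2 facets, and the top h-vector entry h_{r-2}(Γ) = -1; in particular Γ is not Cohen-Macaulay over any field. -/

import Mathlib

open Finset

/-! # Abstract simplicial complexes on vertex set `Fin n` -/

/-- A (nonempty) abstract simplicial complex on vertex set `Fin n`: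
a collection of finite subsets containing `∅` and closed under taking subsets. -/
def IsComplex {n : ℕ} (Δ : Set (Finset (Fin n))) : Prop :=
  ∅ ∈ Δ ∧ ∀ F ∈ Δ, ∀ G ⊆ F, G ∈ Δ

/-- The link of a face `F`. -/
def link {n : ℕ} (Δ : Set (Finset (Fin n))) (F : Finset (Fin n)) : Set (Finset (Fin n)) :=
  {G | Disjoint F G ∧ F ∪ G ∈ Δ}

/-- The dimension of a simplicial complex, as an integer (`-1` for the void/empty complex). -/
noncomputable def dimC {n : ℕ} (Δ : Set (Finset (Fin n))) : ℤ :=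
  sSup ((fun F : Finset (Fin n) => (F.card : ℤ) - 1) '' Δ)

/-- `Δ` is pure with all facets of cardinality `d` (i.e. pure of dimension `d-1`):
there is a face of cardinality `d` and every face is contained in one. -/
def IsPure {n : ℕ} (Δ : Set (Finset (Fin n))) (d : ℕ) : Prop :=
  (∃ F ∈ Δ, F.card = d) ∧ ∀ F ∈ Δ, ∃ G ∈ Δ, F ⊆ G ∧ G.card = d

/-- The Alexander dual `Δ^∨ = {F : [n] \ F ∉ Δ}`. -/
def dualC {n : ℕ} (Δ : Set (Finset (Fin n))) : Set (Finset (Fin n)) :=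
  {F | Fᶜ ∉ Δ}

/-! ## Simplicial (reduced, augmented) chain complex and reduced homology -/

variable (K : Type) [Field K]

/-- The space of `k`-chains: formal `K`-linear combinations of faces of cardinality `k`
(`k = 0` gives the span of the empty face, playing the role of the augmentation). -/
abbrev Chains {n : ℕ} (Δ : Set (Finset (Fin n))) (k : ℕ) : Type :=
  {F : Finset (Fin n) // F ∈ Δ ∧ F.card = k} →₀ K

/-- The boundary of a single face of cardinality `k+1`. -/
noncomputable def boundaryElt {n : ℕ} (Δ : Set (Finset (Fin n))) (k : ℕ)
    (F : {F : Finset (Fin n) // F ∈ Δ ∧ F.card = k + 1}) : Chains K Δ k :=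
  ∑ v ∈ F.1.attach, open Classical in if h : F.1.erase v.1 ∈ Δ then
      ((-1 : K) ^ (F.1.filter (fun w => w < v.1)).card) •
        Finsupp.single ⟨F.1.erase v.1,
          ⟨h, by simp [Finset.card_erase_of_mem v.2, F.2.2]⟩⟩ 1
    else 0

/-- The simplicial boundary map from `(k+1)`-chains to `k`-chains
(for `k = 0` this is the augmentation map). -/
noncomputable def boundaryMap {n : ℕ} (Δ : Set (Finset (Fin n))) (k : ℕ) :
    Chains K Δ (k + 1) →ₗ[K] Chains K Δ k :=
  Finsupp.lsum K fun F => LinearMap.toSpanSingleton K _ (boundaryElt K Δ k F)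

/-- Vanishing of the `i`-th reduced simplicial homology of `Δ` with coefficients in `K`
(`i : ℤ`; for `i ≤ -2` the homology is trivially zero, `i = -1` concerns the augmentation). -/
noncomputable def ReducedHomologyZero {n : ℕ} (Δ : Set (Finset (Fin n))) (i : ℤ) : Prop :=
  if i ≤ -2 then True
  else if i = -1 then Function.Surjective (boundaryMap K Δ 0)
  else LinearMap.ker (boundaryMap K Δ i.toNat) ≤ LinearMap.range (boundaryMap K Δ (i.toNat + 1))

/-! ## Cohen–Macaulay complexes (Reisner's criterion) and relatives -/

/-- `Δ` is Cohen–Macaulay over `K` (by Reisner's criterion). -/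
noncomputable def IsCMComplex {n : ℕ} (Δ : Set (Finset (Fin n))) : Prop :=
  IsComplex Δ ∧ ∀ F ∈ Δ, ∀ i : ℤ, i < dimC (link Δ F) → ReducedHomologyZero K (link Δ F) i

/-- `Δ` is `CMₜ` over `K` with facets of cardinality `d`: it is pure and the link of every
face of cardinality at least `t` is Cohen–Macaulay. -/
noncomputable def IsCMt {n : ℕ} (Δ : Set (Finset (Fin n))) (d t : ℕ) : Prop :=
  IsComplex Δ ∧ IsPure Δ d ∧ ∀ F ∈ Δ, t ≤ F.card → IsCMComplex K (link Δ F)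

/-- `Δ` is Buchsbaum over `K` with facets of cardinality `d`: pure, and
`H̃ᵢ(link F; K) = 0` for every nonempty face `F` and `i < dim link F`. -/
noncomputable def IsBuchsbaum {n : ℕ} (Δ : Set (Finset (Fin n))) (d : ℕ) : Prop :=
  IsComplex Δ ∧ IsPure Δ d ∧ ∀ F ∈ Δ, F ≠ ∅ →
    ∀ i : ℤ, i < dimC (link Δ F) → ReducedHomologyZero K (link Δ F) i

/-- Serre's condition `S_r`: `H̃ᵢ(link F; K) = 0` for all faces `F` and all
`i < min (r-1) (dim link F)`. -/
noncomputable def SerreS {n : ℕ} (Δ : Set (Finset (Fin n))) (r : ℤ) : Prop :=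
  ∀ F ∈ Δ, ∀ i : ℤ, i < min (r - 1) (dimC (link Δ F)) → ReducedHomologyZero K (link Δ F) i
/-! ## Polynomial rings, Stanley–Reisner ideals, graded Betti numbers, depth -/

/-- The polynomial ring `K[x_1,…,x_n]`. -/
abbrev PolyR (K : Type) [Field K] (n : ℕ) := MvPolynomial (Fin n) K

/-- The Stanley–Reisner ideal `I_Δ`, generated by the monomials supported on non-faces. -/
noncomputable def srIdeal {n : ℕ} (Δ : Set (Finset (Fin n))) : Ideal (PolyR K n) :=
  Ideal.span ((fun F : Finset (Fin n) => ∏ i ∈ F, MvPolynomial.X i) '' {F | F ∉ Δ})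

section Koszul

variable (n : ℕ) (M : Type) [AddCommGroup M] [Module (PolyR K n) M]
  [Module K M] [IsScalarTower K (PolyR K n) M]

/-- The `i`-th term `M ⊗ Λⁱ(Kⁿ)` of the Koszul complex of `x_1,…,x_n` with values in `M`,
realized as finitely supported families indexed by `i`-subsets of `[n]`. -/
abbrev KChains (i : ℕ) : Type := {S : Finset (Fin n) // S.card = i} →₀ M

/-- Multiplication by the variable `x_v`, as a `K`-linear endomorphism of `M`. -/
noncomputable def smulX (v : Fin n) : M →ₗ[K] M where
  toFun m := (MvPolynomial.X v : PolyR K n) • m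
  map_add' a b := smul_add _ a b
  map_smul' c m := smul_comm (MvPolynomial.X v : PolyR K n) c m

/-- Koszul differential on a basis element. -/
noncomputable def kdElt (i : ℕ) (S : {S : Finset (Fin n) // S.card = i + 1}) :
    M →ₗ[K] KChains n M i :=
  ∑ v ∈ S.1.attach, ((-1 : K) ^ ((S.1.filter (fun w => w < v.1)).card)) •
    ((Finsupp.lsingle (M := M) ⟨S.1.erase v.1, by
        simp [Finset.card_erase_of_mem v.2, S.2]⟩).comp (smulX K n M v.1))

/-- The Koszul differential `M ⊗ Λ^{i+1} → M ⊗ Λ^i` for the sequence `x_1,…,x_n`. -/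
noncomputable def kd (i : ℕ) : KChains n M (i + 1) →ₗ[K] KChains n M i :=
  Finsupp.lsum K fun S => kdElt K n M i S

/-- The Koszul differential leaving homological degree `i` (the zero map for `i = 0`). -/
noncomputable def kdOut : ∀ i : ℕ, KChains n M i →ₗ[K] KChains n M (i - 1)
  | 0 => 0
  | (i + 1) => kd K n M i

/-- The internal-degree-`j` part of the `i`-th Koszul chain module, with respect to a
grading `g` of `M` by `K`-subspaces (`e_S ⊗ m` has degree `|S| + deg m`). -/
def KCdeg (g : ℤ → Submodule K M) (i : ℕ) (j : ℤ) : Submodule K (KChains n M i) where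
  carrier := {f | ∀ S, f S ∈ g (j - i)}
  add_mem' := fun hf hg S => by
    rw [Finsupp.add_apply]; exact add_mem (hf S) (hg S)
  zero_mem' := fun S => by rw [Finsupp.zero_apply]; exact zero_mem _
  smul_mem' := fun c f hf S => by
    rw [Finsupp.smul_apply]; exact Submodule.smul_mem _ c (hf S)

/-- Vanishing of the graded Betti number `β_{i,j}(M) = dim_K Tor_i(M,K)_j`, expressed via
the Koszul complex of `x_1,…,x_n`: every internal-degree-`j` cycle in homological degree `i`
is a boundary. -/
noncomputable def BettiZero (g : ℤ → Submodule K M) (i : ℕ) (j : ℤ) : Prop :=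
  ∀ f ∈ KCdeg K n M g i j, kdOut K n M i f = 0 → f ∈ LinearMap.range (kd K n M i)

end Koszul

/-- The grading of a homogeneous ideal `I ⊆ K[x_1,…,x_n]` by `K`-subspaces. -/
noncomputable def idealGrading {n : ℕ} (I : Ideal (PolyR K n)) (j : ℤ) : Submodule K ↥I :=
  Submodule.comap ((Submodule.subtype I).restrictScalars K)
    (if 0 ≤ j then Submodule.restrictScalars K
        (MvPolynomial.homogeneousSubmodule (Fin n) K j.toNat) else ⊥)

/-- The grading of the quotient `K[x_1,…,x_n]/I` by a homogeneous ideal. -/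
noncomputable def quotGrading {n : ℕ} (I : Ideal (PolyR K n)) (j : ℤ) :
    Submodule K (PolyR K n ⧸ I) :=
  Submodule.map ((Submodule.mkQ I).restrictScalars K)
    (if 0 ≤ j then Submodule.restrictScalars K
        (MvPolynomial.homogeneousSubmodule (Fin n) K j.toNat) else ⊥)

/-- The Green–Lazarsfeld property `N_{e,p}` for a homogeneous ideal `I`:
`I` is generated in degree `e` and `β_{i,j}(I) = 0` for all `i < p` and `j ≠ i + e`. -/
noncomputable def PropertyN {n : ℕ} (I : Ideal (PolyR K n)) (e : ℕ) (p : ℤ) : Prop :=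
  I = Ideal.span {f | f ∈ I ∧ MvPolynomial.IsHomogeneous f e} ∧
  ∀ (i : ℕ) (j : ℤ), (i : ℤ) < p → j ≠ (i : ℤ) + e →
    BettiZero K n ↥I (idealGrading K I) i j

/-- The graded maximal ideal `(x_1,…,x_n)`. -/
noncomputable def maxIdeal (n : ℕ) : Ideal (PolyR K n) :=
  Ideal.span (Set.range MvPolynomial.X)

/-- `depth M ≥ k`: there exists an `M`-regular sequence of length at least `k` inside
the graded maximal ideal `(x_1,…,x_n)`. -/
noncomputable def DepthGE {n : ℕ} (M : Type) [AddCommGroup M] [Module (PolyR K n) M]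
    (k : ℤ) : Prop :=
  ∃ rs : List (PolyR K n), k ≤ (rs.length : ℤ) ∧ (∀ r ∈ rs, r ∈ maxIdeal K n) ∧
    RingTheory.Sequence.IsRegular M rs

/-- The Stanley–Reisner ring `K[Δ]`. -/
abbrev SRRing {n : ℕ} (Δ : Set (Finset (Fin n))) : Type := PolyR K n ⧸ srIdeal K Δ
/-! ## Graphs, cycles, chords, clique complexes, f-vectors -/

/-- The clique complex of a graph: faces are the (finite) cliques. -/
def cliqueComplexC {V : Type} (G : SimpleGraph V) : Set (Finset V) :=
  {F | G.IsClique ↑F}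

/-- The 1-skeleton of a simplicial complex, as a simple graph. -/
def oneSkeleton {n : ℕ} (Δ : Set (Finset (Fin n))) : SimpleGraph (Fin n) where
  Adj a b := a ≠ b ∧ ({a, b} : Finset (Fin n)) ∈ Δ
  symm := ⟨fun a b h => ⟨h.1.symm, by rw [Finset.pair_comm]; exact h.2⟩⟩
  loopless := ⟨fun a h => h.1 rfl⟩

/-- A cycle (walk) has a chord: an edge of `G` joining two vertices of the cycle
which is not an edge of the cycle. -/
def HasChord {V : Type} {G : SimpleGraph V} {v : V} (c : G.Walk v v) : Prop :=
  ∃ a b, a ∈ c.support ∧ b ∈ c.support ∧ G.Adj a b ∧ s(a, b) ∉ c.edges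

/-- Every cycle of `G` of length at most `r` (and at least `4`, so that a chord can exist)
has a chord. -/
def ChordalUpTo {V : Type} (G : SimpleGraph V) (r : ℕ) : Prop :=
  ∀ ⦃v : V⦄ (c : G.Walk v v), c.IsCycle → 4 ≤ c.length → c.length ≤ r → HasChord c

/-- `G` is chordal: every cycle of length at least 4 has a chord. -/
def IsChordalGraph {V : Type} (G : SimpleGraph V) : Prop :=
  ∀ ⦃v : V⦄ (c : G.Walk v v), c.IsCycle → 4 ≤ c.length → HasChord c

/-- `G` is bipartite. -/
def IsBipartite {V : Type} (G : SimpleGraph V) : Prop :=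
  ∃ f : V → Bool, ∀ a b, G.Adj a b → f a ≠ f b

/-- The cycle graph on `m` vertices. -/
def cycleGraph (m : ℕ) : SimpleGraph (Fin m) where
  Adj a b := a ≠ b ∧ ((a.val + 1) % m = b.val ∨ (b.val + 1) % m = a.val)
  symm := ⟨fun a b h => ⟨h.1.symm, h.2.symm⟩⟩
  loopless := ⟨fun a h => h.1 rfl⟩

/-- The edge ideal `I(G)` of a graph on `[n]`. -/
noncomputable def edgeIdeal {n : ℕ} (G : SimpleGraph (Fin n)) : Ideal (PolyR K n) :=
  Ideal.span {f | ∃ a b, G.Adj a b ∧ f = MvPolynomial.X a * MvPolynomial.X b}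

/-- A homogeneous ideal generated in degree `e` has a linear resolution:
`β_{i,j} = 0` whenever `j ≠ i + e`. -/
noncomputable def HasLinearResolution {n : ℕ} (I : Ideal (PolyR K n)) (e : ℕ) : Prop :=
  I = Ideal.span {f | f ∈ I ∧ MvPolynomial.IsHomogeneous f e} ∧
  ∀ (i : ℕ) (j : ℤ), j ≠ (i : ℤ) + e → BettiZero K n ↥I (idealGrading K I) i j

/-- The number of faces of `Δ` of cardinality `k` (so `faceCount Δ k = f_{k-1}`). -/
noncomputable def faceCount {n : ℕ} (Δ : Set (Finset (Fin n))) (k : ℕ) : ℕ :=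
  Set.ncard {F | F ∈ Δ ∧ F.card = k}

/-- The set of facets (maximal faces) of `Δ`. -/
def facetSet {n : ℕ} (Δ : Set (Finset (Fin n))) : Set (Finset (Fin n)) :=
  {F | F ∈ Δ ∧ ∀ G ∈ Δ, F ⊆ G → F = G}

/-- The complex on the vertices of the `r`-cycle whose facets are the complements
`V(C) \ {i, j}` of the non-adjacent (non-consecutive) pairs of vertices of the cycle. -/
def GammaC (r : ℕ) : Set (Finset (Fin r)) :=
  {G | ∃ i j : Fin r, i ≠ j ∧ ¬ (cycleGraph r).Adj i j ∧ G ⊆ ({i, j} : Finset (Fin r))ᶜ}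

section Aux
variable {r : ℕ}

lemma mod_succ_eq {x r : ℕ} (h : x < r) : (x + 1) % r = if x + 1 = r then 0 else x + 1 := by
  split
  · simp [*, Nat.mod_self]
  · exact Nat.mod_eq_of_lt (by omega)

lemma cycle_adj_iff (a b : Fin r) :
    (cycleGraph r).Adj a b ↔ a.val ≠ b.val ∧
      ((a.val + 1 = b.val ∨ (a.val + 1 = r ∧ b.val = 0)) ∨
       (b.val + 1 = a.val ∨ (b.val + 1 = r ∧ a.val = 0))) := by
  have ha := a.isLt; have hb := b.isLt
  show (a ≠ b ∧ _) ↔ _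
  rw [Ne, Fin.ext_iff, mod_succ_eq ha, mod_succ_eq hb]
  constructor <;> rintro ⟨h1, h2⟩ <;> refine ⟨h1, ?_⟩ <;> split_ifs at * <;> omega

lemma no_triangle (hr : 4 ≤ r) {a b c : Fin r} (hab : (cycleGraph r).Adj a b)
    (hbc : (cycleGraph r).Adj b c) (hac : (cycleGraph r).Adj a c) : False := by
  rw [cycle_adj_iff] at hab hbc hac
  have := a.isLt; have := b.isLt; have := c.isLt
  omega

lemma fpair_eq {α : Type*} [DecidableEq α] {a b c d : α} :
    ({a, b} : Finset α) = {c, d} ↔ (a = c ∧ b = d) ∨ (a = d ∧ b = c) := by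
  rw [← Finset.coe_inj]
  simp only [Finset.coe_insert, Finset.coe_singleton]
  exact Set.pair_eq_pair_iff

lemma val_add_one [NeZero r] (a : Fin r) : (a + 1).val = (a.val + 1) % r := by
  simp only [Fin.add_def, Fin.val_one']
  conv_rhs => rw [Nat.add_mod, Nat.mod_eq_of_lt a.isLt]

end Aux

section Count
variable {r : ℕ} [NeZero r]

lemma succ_ne (hr : 4 ≤ r) (a : Fin r) : a + 1 ≠ a := by
  intro h
  have := congrArg Fin.val h
  rw [val_add_one, mod_succ_eq a.isLt] at this
  have := a.isLt
  split_ifs at * <;> omega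

lemma adj_succ (hr : 4 ≤ r) (a : Fin r) : (cycleGraph r).Adj a (a + 1) := by
  rw [cycle_adj_iff, val_add_one, mod_succ_eq a.isLt]
  have := a.isLt
  split_ifs <;> omega

lemma eq_add_one_iff (a b : Fin r) : b = a + 1 ↔ (a.val + 1) % r = b.val := by
  rw [Fin.ext_iff, val_add_one, eq_comm]

def edgeF (r : ℕ) [NeZero r] : Finset (Finset (Fin r)) := univ.image (fun i : Fin r => {i, i + 1})

def nonEdgeF (r : ℕ) [NeZero r] : Finset (Finset (Fin r)) := (univ.powersetCard 2) \ edgeF r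

lemma add_two_ne (hr : 4 ≤ r) (a : Fin r) : a + 1 + 1 ≠ a := by
  intro h
  have := congrArg Fin.val h
  rw [val_add_one, val_add_one, mod_succ_eq a.isLt] at this
  have ha := a.isLt
  split_ifs at this with h1
  · rw [mod_succ_eq (by omega)] at this
    split_ifs at this <;> omega
  · rw [mod_succ_eq (by omega)] at this
    split_ifs at this <;> omega

lemma pair_mem_edgeF_iff (hr : 4 ≤ r) {i j : Fin r} (hij : i ≠ j) :
    ({i, j} : Finset (Fin r)) ∈ edgeF r ↔ (cycleGraph r).Adj i j := by
  constructor
  · intro h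
    rw [edgeF] at h
    obtain ⟨a, -, ha⟩ := Finset.mem_image.1 h
    rcases fpair_eq.1 ha.symm with ⟨rfl, rfl⟩ | ⟨h1, h2⟩
    · exact adj_succ hr _
    · subst h1 h2; exact (adj_succ hr j).symm
  · intro h
    rcases h.2 with h1 | h1
    · have : j = i + 1 := (eq_add_one_iff i j).2 h1
      subst this
      rw [edgeF]
      exact Finset.mem_image.2 ⟨i, mem_univ _, rfl⟩
    · have : i = j + 1 := (eq_add_one_iff j i).2 h1
      subst this
      rw [Finset.pair_comm, edgeF]
      exact Finset.mem_image.2 ⟨j, mem_univ _, rfl⟩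

lemma mem_nonEdgeF (hr : 4 ≤ r) (e : Finset (Fin r)) :
    e ∈ nonEdgeF r ↔ ∃ i j : Fin r, i ≠ j ∧ ¬ (cycleGraph r).Adj i j ∧ e = {i, j} := by
  rw [nonEdgeF, Finset.mem_sdiff, Finset.mem_powersetCard_univ]
  constructor
  · rintro ⟨h2, hne⟩
    obtain ⟨i, j, hij, rfl⟩ := Finset.card_eq_two.1 h2
    exact ⟨i, j, hij, fun had => hne ((pair_mem_edgeF_iff hr hij).2 had), rfl⟩
  · rintro ⟨i, j, hij, hna, rfl⟩
    exact ⟨Finset.card_pair hij, fun he => hna ((pair_mem_edgeF_iff hr hij).1 he)⟩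

lemma card_edgeF (hr : 4 ≤ r) : (edgeF r).card = r := by
  rw [edgeF, Finset.card_image_of_injective _ ?_, Finset.card_univ, Fintype.card_fin]
  intro a b hab
  rcases fpair_eq.1 hab with ⟨h1, -⟩ | ⟨h1, h2⟩
  · exact h1
  · subst h1; exact absurd h2 (add_two_ne hr b)

lemma card_nonEdgeF (hr : 4 ≤ r) : (nonEdgeF r).card = r.choose 2 - r := by
  rw [nonEdgeF, Finset.card_sdiff_of_subset, Finset.card_powersetCard, Finset.card_univ,
    Fintype.card_fin, card_edgeF hr]
  intro e he
  rw [edgeF] at he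
  obtain ⟨a, -, rfl⟩ := Finset.mem_image.1 he
  rw [Finset.mem_powersetCard_univ]
  exact Finset.card_pair (Ne.symm (succ_ne hr a))

end Count

section Gamma
variable {r : ℕ}

lemma card_pair_compl {i j : Fin r} (hij : i ≠ j) :
    ({i, j} : Finset (Fin r))ᶜ.card = r - 2 := by
  rw [Finset.card_compl, Finset.card_pair hij, Fintype.card_fin]

lemma mem_gamma_card_le {G : Finset (Fin r)} (hG : G ∈ GammaC r) :
    G.card ≤ r - 2 := by
  obtain ⟨i, j, hij, -, hsub⟩ := hG
  calc G.card ≤ _ := Finset.card_le_card hsub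
  _ = r - 2 := card_pair_compl hij

lemma subset_compl_pair {F : Finset (Fin r)} {p q : Fin r} (hp : p ∉ F) (hq : q ∉ F) :
    F ⊆ ({p, q} : Finset (Fin r))ᶜ := by
  intro x hx
  rw [Finset.mem_compl, Finset.mem_insert, Finset.mem_singleton]
  rintro (rfl | rfl) <;> contradiction

lemma low_mem_gamma (hr : 4 ≤ r) {F : Finset (Fin r)} (hF : F.card ≤ r - 3) :
    F ∈ GammaC r := by
  have hcompl : 3 ≤ Fᶜ.card := by
    rw [Finset.card_compl, Fintype.card_fin]; omega
  obtain ⟨t, hts, ht3⟩ := Finset.exists_subset_card_eq hcompl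
  obtain ⟨a, b, c, hab, hac, hbc, rfl⟩ := Finset.card_eq_three.1 ht3
  have haF : a ∉ F := Finset.mem_compl.1 (hts (by simp))
  have hbF : b ∉ F := Finset.mem_compl.1 (hts (by simp))
  have hcF : c ∉ F := Finset.mem_compl.1 (hts (by simp))
  by_cases h1 : (cycleGraph r).Adj a b
  · by_cases h2 : (cycleGraph r).Adj b c
    · by_cases h3 : (cycleGraph r).Adj a c
      · exact absurd h3 (fun h3 => no_triangle hr h1 h2 h3)
      · exact ⟨a, c, hac, h3, subset_compl_pair haF hcF⟩
    · exact ⟨b, c, hbc, h2, subset_compl_pair hbF hcF⟩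
  · exact ⟨a, b, hab, h1, subset_compl_pair haF hbF⟩

lemma compl_pair_mem {i j : Fin r} (hij : i ≠ j) (hna : ¬ (cycleGraph r).Adj i j) :
    ({i, j} : Finset (Fin r))ᶜ ∈ GammaC r :=
  ⟨i, j, hij, hna, subset_rfl⟩

lemma top_face {G : Finset (Fin r)} (hG : G ∈ GammaC r) (hc : G.card = r - 2) :
    ∃ i j : Fin r, i ≠ j ∧ ¬ (cycleGraph r).Adj i j ∧ G = ({i, j} : Finset (Fin r))ᶜ := by
  obtain ⟨i, j, hij, hna, hsub⟩ := hG
  exact ⟨i, j, hij, hna, Finset.eq_of_subset_of_card_le hsub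
    (by rw [card_pair_compl hij, hc])⟩

lemma facetSet_eq (hr : 4 ≤ r) [NeZero r] :
    facetSet (GammaC r) = ↑((nonEdgeF r).image compl) := by
  ext F
  simp only [facetSet, Set.mem_setOf_eq, Finset.coe_image, Set.mem_image, Finset.mem_coe]
  constructor
  · rintro ⟨hF, hmax⟩
    obtain ⟨i, j, hij, hna, hsub⟩ := hF
    have hFe : F = ({i, j} : Finset (Fin r))ᶜ := hmax _ (compl_pair_mem hij hna) hsub
    exact ⟨{i, j}, (mem_nonEdgeF hr _).2 ⟨i, j, hij, hna, rfl⟩, hFe.symm⟩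
  · rintro ⟨e, he, rfl⟩
    obtain ⟨i, j, hij, hna, rfl⟩ := (mem_nonEdgeF hr e).1 he
    refine ⟨compl_pair_mem hij hna, fun G hG hsub => ?_⟩
    exact Finset.eq_of_subset_of_card_le hsub
      (by rw [card_pair_compl hij]; exact mem_gamma_card_le hG)

lemma faceCount_low (hr : 4 ≤ r) {k : ℕ} (hk : k ≤ r - 3) :
    faceCount (GammaC r) k = r.choose k := by
  have : {F | F ∈ GammaC r ∧ F.card = k} = ↑(Finset.univ.powersetCard k (α := Fin r)) := by
    ext F
    simp only [Set.mem_setOf_eq, Finset.mem_coe,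
      Finset.mem_powersetCard_univ]
    exact ⟨fun h => h.2, fun h => ⟨low_mem_gamma hr (h ▸ hk), h⟩⟩
  rw [faceCount, this, Set.ncard_coe_finset, Finset.card_powersetCard, Finset.card_univ,
    Fintype.card_fin]

lemma faceCount_top (hr : 4 ≤ r) [NeZero r] :
    faceCount (GammaC r) (r - 2) = r.choose 2 - r := by
  have : {F | F ∈ GammaC r ∧ F.card = r - 2} = ↑((nonEdgeF r).image compl) := by
    ext F
    simp only [Set.mem_setOf_eq, Finset.coe_image, Set.mem_image, Finset.mem_coe]
    constructor
    · rintro ⟨hF, hc⟩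
      obtain ⟨i, j, hij, hna, rfl⟩ := top_face hF hc
      exact ⟨{i, j}, (mem_nonEdgeF hr _).2 ⟨i, j, hij, hna, rfl⟩, rfl⟩
    · rintro ⟨e, he, rfl⟩
      obtain ⟨i, j, hij, hna, rfl⟩ := (mem_nonEdgeF hr e).1 he
      exact ⟨compl_pair_mem hij hna, card_pair_compl hij⟩
  rw [faceCount, this, Set.ncard_coe_finset,
    Finset.card_image_of_injective _ compl_injective, card_nonEdgeF hr]

lemma choose_sub_arith (hr : 4 ≤ r) : r.choose 2 - r = r * (r - 3) / 2 := by
  obtain ⟨s, rfl⟩ : ∃ s, r = s + 4 := ⟨r - 4, by omega⟩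
  rw [Nat.choose_two_right]
  have e1 : s + 4 - 1 = s + 3 := by omega
  have e2 : s + 4 - 3 = s + 1 := by omega
  rw [e1, e2]
  obtain ⟨a, ha⟩ : ∃ a, (s+4)*(s+3) = 2*a := by
    rcases Nat.even_or_odd s with ⟨t, rfl⟩ | ⟨t, rfl⟩
    · exact ⟨(t+2)*(2*t+3), by ring⟩
    · exact ⟨(2*t+5)*(t+2), by ring⟩
  obtain ⟨b, hb⟩ : ∃ b, (s+4)*(s+1) = 2*b := by
    rcases Nat.even_or_odd s with ⟨t, rfl⟩ | ⟨t, rfl⟩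
    · exact ⟨(t+2)*(2*t+1), by ring⟩
    · exact ⟨(2*t+5)*(t+1), by ring⟩
  have key : (s+4)*(s+3) = (s+4)*(s+1) + 2*(s+4) := by ring
  rw [ha, hb, Nat.mul_div_cancel_left _ (by norm_num), Nat.mul_div_cancel_left _ (by norm_num)]
  omega

end Gamma

section Pure
variable {r : ℕ}

lemma exists_nonadj (hr : 4 ≤ r) :
    ∃ i j : Fin r, i ≠ j ∧ ¬ (cycleGraph r).Adj i j := by
  refine ⟨⟨0, by omega⟩, ⟨2, by omega⟩, ?_, ?_⟩
  · simp [Fin.ext_iff]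
  · rw [cycle_adj_iff]
    simp only [not_and, not_or]
    omega

lemma gamma_pure (hr : 4 ≤ r) : IsPure (GammaC r) (r - 2) := by
  obtain ⟨i, j, hij, hna⟩ := exists_nonadj hr
  constructor
  · exact ⟨_, compl_pair_mem hij hna, card_pair_compl hij⟩
  · rintro F ⟨i, j, hij, hna, hsub⟩
    exact ⟨_, compl_pair_mem hij hna, hsub, card_pair_compl hij⟩

lemma alt_choose (n : ℕ) : ∀ m : ℕ,
    ∑ i ∈ Finset.range (m+1), (-1:ℤ)^i * ((n+1).choose i) = (-1)^m * (n.choose m)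
  | 0 => by simp
  | (m+1) => by
    rw [Finset.sum_range_succ, alt_choose n m, Nat.choose_succ_succ]
    push_cast
    ring

lemma gamma_hsum (hr : 4 ≤ r) :
    (∑ i ∈ Finset.range (r - 1), (-1 : ℤ) ^ (r - 2 - i) * (faceCount (GammaC r) i : ℤ))
      = -1 := by
  haveI : NeZero r := ⟨by omega⟩
  obtain ⟨s, rfl⟩ : ∃ s, r = s + 4 := ⟨r - 4, by omega⟩
  obtain ⟨a, ha⟩ : ∃ a, (s+3)*(s+2) = 2*a := by
    rcases Nat.even_or_odd s with ⟨t, rfl⟩ | ⟨t, rfl⟩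
    · exact ⟨(2*t+3)*(t+1), by ring⟩
    · exact ⟨(t+2)*(2*t+3), by ring⟩
  obtain ⟨b, hb⟩ : ∃ b, (s+4)*(s+1) = 2*b := by
    rcases Nat.even_or_odd s with ⟨t, rfl⟩ | ⟨t, rfl⟩
    · exact ⟨(t+2)*(2*t+1), by ring⟩
    · exact ⟨(2*t+5)*(t+1), by ring⟩
  have hab : a = b + 1 := by
    have h1 : (s+3)*(s+2) = (s+4)*(s+1) + 2 := by ring
    omega
  have hfa : faceCount (GammaC (s+4)) (s+2) = b := by
    have h := faceCount_top (r := s+4) (by omega)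
    rw [show s+4-2 = s+2 by omega] at h
    rw [h, Nat.choose_two_right, show s+4-1 = s+3 by omega]
    have h2 : (s+4)*(s+3) = 2*(b+(s+4)) := by
      calc (s+4)*(s+3) = (s+4)*(s+1) + 2*(s+4) := by ring
      _ = 2*(b+(s+4)) := by omega
    rw [h2, Nat.mul_div_cancel_left _ two_pos]
    omega
  have hcs : (s+3).choose (s+1) = a := by
    rw [show s+1 = s+3-2 by omega, Nat.choose_symm (by omega), Nat.choose_two_right,
      show s+3-1 = s+2 by omega, ha, Nat.mul_div_cancel_left _ two_pos]
  rw [show s+4-1 = (s+1+1)+1 by omega, Finset.sum_range_succ]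
  have hmain : ∀ i ∈ Finset.range (s+1+1),
      (-1:ℤ)^(s+4-2-i) * (faceCount (GammaC (s+4)) i : ℤ)
        = (-1:ℤ)^(s+2) * ((-1:ℤ)^i * (((s+3)+1).choose i : ℤ)) := by
    intro i hi
    rw [Finset.mem_range] at hi
    rw [faceCount_low (by omega) (by omega)]
    have h2 : (-1:ℤ)^(s+2-i) * ((-1:ℤ)^i * (-1:ℤ)^i) = (-1:ℤ)^(s+2) * (-1:ℤ)^i := by
      rw [← mul_assoc, ← pow_add, show s+2-i+i = s+2 by omega]
    have h3 : (-1:ℤ)^i * (-1:ℤ)^i = 1 := by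
      rw [← pow_add]
      exact Even.neg_one_pow ⟨i, rfl⟩
    rw [show s+4-2-i = s+2-i by omega]
    rw [h3, mul_one] at h2
    rw [h2, mul_assoc]
  rw [Finset.sum_congr rfl hmain, ← Finset.mul_sum, alt_choose (s+3) (s+1), hcs, hfa,
    show s+4-2-(s+1+1) = 0 by omega]
  have h4 : (-1:ℤ)^(s+2) * (-1:ℤ)^(s+1) = -1 := by
    rw [← pow_add]
    exact Odd.neg_one_pow ⟨s+1, by ring⟩
  rw [pow_zero, one_mul, ← mul_assoc, h4]
  rw [hab]
  push_cast
  ring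

end Pure

section Boundary
variable {𝕂 : Type} [Field 𝕂] {n : ℕ} {Δ : Set (Finset (Fin n))}

lemma boundary_single (k : ℕ) (F : {F : Finset (Fin n) // F ∈ Δ ∧ F.card = k + 1}) :
    boundaryMap 𝕂 Δ k (Finsupp.single F 1) = boundaryElt 𝕂 Δ k F := by
  rw [boundaryMap, Finsupp.lsum_single, LinearMap.toSpanSingleton_apply_one]

lemma boundaryElt_eq (hΔ : IsComplex Δ) (k : ℕ) (F : {F : Finset (Fin n) // F ∈ Δ ∧ F.card = k + 1}) :
    boundaryElt 𝕂 Δ k F = ∑ v ∈ F.1.attach,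
      ((-1 : 𝕂) ^ (F.1.filter (fun w => w < v.1)).card) •
        Finsupp.single ⟨F.1.erase v.1, ⟨hΔ.2 _ F.2.1 _ (Finset.erase_subset _ _),
          by simp [Finset.card_erase_of_mem v.2, F.2.2]⟩⟩ 1 := by
  rw [boundaryElt]
  refine Finset.sum_congr rfl fun v _ => ?_
  rw [dif_pos (hΔ.2 _ F.2.1 _ (Finset.erase_subset _ _))]

lemma sign_step {F : Finset (Fin n)} {v w : Fin n} (hw : w ∈ F) (hwv : w < v) :
    ∃ A, (F.filter (fun x => x < v)).card = A + 1 ∧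
      ((F.erase v).filter (fun x => x < w)).card = (F.filter (fun x => x < w)).card ∧
      ((F.erase w).filter (fun x => x < v)).card = A := by
  have hmem : w ∈ F.filter (fun x => x < v) := Finset.mem_filter.2 ⟨hw, hwv⟩
  have hpos : 1 ≤ (F.filter (fun x => x < v)).card := Finset.card_pos.2 ⟨w, hmem⟩
  refine ⟨(F.filter (fun x => x < v)).card - 1, by omega, ?_, ?_⟩
  · rw [Finset.filter_erase, Finset.erase_eq_of_notMem]
    intro hv
    exact absurd (Finset.mem_filter.1 hv).2 (asymm hwv)
  · rw [Finset.filter_erase, Finset.card_erase_of_mem hmem]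

lemma sign_cancel {F : Finset (Fin n)} {v w : Fin n} (hv : v ∈ F) (hw : w ∈ F) (h : v ≠ w) :
    (-1:𝕂)^(F.filter (fun x => x < v)).card * (-1:𝕂)^((F.erase v).filter (fun x => x < w)).card
      + (-1:𝕂)^(F.filter (fun x => x < w)).card *
          (-1:𝕂)^((F.erase w).filter (fun x => x < v)).card = 0 := by
  rcases h.lt_or_gt with hvw | hwv
  · obtain ⟨A, h1, h2, h3⟩ := sign_step hv hvw
    rw [h1, h2, h3, pow_succ]
    ring
  · obtain ⟨A, h1, h2, h3⟩ := sign_step hw hwv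
    rw [h1, h2, h3, pow_succ]
    ring

lemma smul_single_cancel {ι : Type*} {c d : 𝕂} {x y : ι} (hxy : x = y) (h : c + d = 0)
    {m : 𝕂} : c • Finsupp.single x m + d • Finsupp.single y m = (0 : ι →₀ 𝕂) := by
  subst hxy
  rw [← add_smul, h, zero_smul]

lemma boundary_boundary (hΔ : IsComplex Δ) (k : ℕ) (x : Chains 𝕂 Δ (k + 2)) :
    boundaryMap 𝕂 Δ k (boundaryMap 𝕂 Δ (k + 1) x) = 0 := by
  suffices hext : (boundaryMap 𝕂 Δ k).comp (boundaryMap 𝕂 Δ (k + 1)) = 0 by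
    have := congrArg (fun φ => φ x) hext
    simpa using this
  apply Finsupp.lhom_ext
  intro F b
  have h1 : (Finsupp.single F b) = b • Finsupp.single F (1 : 𝕂) := by
    rw [Finsupp.smul_single, smul_eq_mul, mul_one]
  rw [LinearMap.comp_apply, h1, map_smul, map_smul, LinearMap.zero_apply]
  suffices hs : boundaryMap 𝕂 Δ k (boundaryMap 𝕂 Δ (k + 1) (Finsupp.single F 1)) = 0 by
    rw [hs, smul_zero]
  rw [boundary_single, boundaryElt_eq hΔ, map_sum]
  rw [Finset.sum_congr rfl (fun v _ => by
    rw [map_smul, boundary_single, boundaryElt_eq hΔ, Finset.smul_sum])]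
  rw [Finset.sum_congr rfl (fun v _ => Finset.sum_congr rfl (fun w _ => smul_smul _ _ _))]
  rw [Finset.sum_sigma']
  refine Finset.sum_involution
    (fun p _ => ⟨⟨p.2.1, Finset.mem_of_mem_erase p.2.2⟩,
      ⟨p.1.1, Finset.mem_erase.2 ⟨(Finset.ne_of_mem_erase p.2.2).symm, p.1.2⟩⟩⟩)
    (fun p hp => ?_) (fun p hp _ => ?_) (fun p hp => ?_) (fun p hp => ?_)
  · exact smul_single_cancel (Subtype.ext Finset.erase_right_comm).symm
      (sign_cancel p.1.2 (Finset.mem_of_mem_erase p.2.2) (Finset.ne_of_mem_erase p.2.2).symm)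
  · intro h
    have := congrArg (fun q => q.1.1) h
    exact (Finset.ne_of_mem_erase p.2.2) this
  · simp [Finset.mem_sigma]
  · rfl

end Boundary

section Final
variable {r : ℕ}

lemma gamma_is_complex (hr : 4 ≤ r) : IsComplex (GammaC r) := by
  constructor
  · exact low_mem_gamma hr (by simp)
  · rintro F ⟨i, j, hij, hna, hsub⟩ G hG
    exact ⟨i, j, hij, hna, hG.trans hsub⟩

lemma link_empty {n : ℕ} (Δ : Set (Finset (Fin n))) : link Δ ∅ = Δ := by
  ext G
  simp [link]

lemma chains_finrank (𝕂 : Type) [Field 𝕂] {n : ℕ} (Δ : Set (Finset (Fin n))) (k : ℕ) :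
    Module.finrank 𝕂 (Chains 𝕂 Δ k) = faceCount Δ k := by
  haveI : Fintype {F : Finset (Fin n) // F ∈ Δ ∧ F.card = k} := Fintype.ofFinite _
  rw [Module.finrank_finsupp_self, ← Nat.card_eq_fintype_card, faceCount,
    ← Nat.card_coe_set_eq]
  rfl

lemma gamma_dim_ge (hr : 4 ≤ r) : ((r : ℤ) - 3) ≤ dimC (GammaC r) := by
  obtain ⟨i, j, hij, hna⟩ := exists_nonadj hr
  have hb : BddAbove ((fun F : Finset (Fin r) => (F.card : ℤ) - 1) '' (GammaC r)) := by
    refine ⟨(r : ℤ), ?_⟩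
    rintro x ⟨F, hF, rfl⟩
    have h2 : F.card ≤ r := le_trans F.card_le_univ (by simp)
    simp only
    omega
  have hmem := Set.mem_image_of_mem (fun F : Finset (Fin r) => (F.card : ℤ) - 1)
    (compl_pair_mem hij hna)
  have hle : ((({i, j} : Finset (Fin r))ᶜ.card : ℤ) - 1) ≤ dimC (GammaC r) :=
    le_csSup hb hmem
  rw [card_pair_compl hij] at hle
  calc ((r:ℤ) - 3) = ((r - 2 : ℕ) : ℤ) - 1 := by omega
  _ ≤ _ := hle

lemma gamma_not_CM (hr : 4 ≤ r) (𝕂 : Type) [Field 𝕂] : ¬ IsCMComplex 𝕂 (GammaC r) := by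
  intro hCM
  haveI : NeZero r := ⟨by omega⟩
  have hcx : IsComplex (GammaC r) := gamma_is_complex hr
  have hempty : (∅ : Finset (Fin r)) ∈ GammaC r := hcx.1
  have hdim : ((r : ℤ) - 3) ≤ dimC (link (GammaC r) ∅) := by
    rw [link_empty]
    exact gamma_dim_ge hr
  have hsurj : Function.Surjective (boundaryMap 𝕂 (GammaC r) 0) := by
    have h := hCM.2 ∅ hempty (-1) (by omega)
    rw [link_empty, ReducedHomologyZero, if_neg (by omega), if_pos rfl] at h
    exact h
  have hker : ∀ k : ℕ, (k : ℤ) < (r : ℤ) - 3 →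
      LinearMap.ker (boundaryMap 𝕂 (GammaC r) k)
        ≤ LinearMap.range (boundaryMap 𝕂 (GammaC r) (k + 1)) := by
    intro k hk
    have h := hCM.2 ∅ hempty (k : ℤ) (by omega)
    rw [link_empty, ReducedHomologyZero, if_neg (by omega), if_neg (by omega)] at h
    simpa using h
  set c : ℕ → ℕ := fun k => faceCount (GammaC r) k with hc
  set rk : ℕ → ℕ := fun k =>
    Module.finrank 𝕂 (LinearMap.range (boundaryMap 𝕂 (GammaC r) k)) with hrk
  set nu : ℕ → ℕ := fun k =>
    Module.finrank 𝕂 (LinearMap.ker (boundaryMap 𝕂 (GammaC r) k)) with hnu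
  have hrn : ∀ k, rk k + nu k = c (k + 1) := by
    intro k
    rw [hc, hrk, hnu]
    simp only
    rw [show faceCount (GammaC r) (k+1) = Module.finrank 𝕂 (Chains 𝕂 (GammaC r) (k+1)) from
      (chains_finrank 𝕂 (GammaC r) (k+1)).symm]
    exact LinearMap.finrank_range_add_finrank_ker _
  have hexact : ∀ k : ℕ, (k : ℤ) < (r : ℤ) - 3 → rk (k + 1) = nu k := by
    intro k hk
    apply le_antisymm
    · have hle : LinearMap.range (boundaryMap 𝕂 (GammaC r) (k + 1))
          ≤ LinearMap.ker (boundaryMap 𝕂 (GammaC r) k) := by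
        rintro x ⟨y, rfl⟩
        exact LinearMap.mem_ker.2 (boundary_boundary hcx k y)
      exact Submodule.finrank_mono hle
    · exact Submodule.finrank_mono (hker k hk)
  have hrk0 : rk 0 = c 0 := by
    have htop : LinearMap.range (boundaryMap 𝕂 (GammaC r) 0) = ⊤ :=
      LinearMap.range_eq_top.2 hsurj
    rw [hrk, hc]
    simp only
    rw [htop, finrank_top]
    exact chains_finrank 𝕂 (GammaC r) 0
  obtain ⟨s, rfl⟩ : ∃ s, r = s + 4 := ⟨r - 4, by omega⟩
  have claim : ∀ m : ℕ, m ≤ s + 1 →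
      (rk m : ℤ) = ∑ j ∈ Finset.range (m + 1), (-1:ℤ)^(m - j) * (c j : ℤ) := by
    intro m
    induction m with
    | zero => intro _; simp [hrk0]
    | succ m ih =>
      intro hm
      have h1 : rk (m + 1) = nu m := hexact m (by push_cast; omega)
      have h2 : (nu m : ℤ) = (c (m + 1) : ℤ) - rk m := by
        have := hrn m
        omega
      rw [h1, h2, ih (by omega)]
      conv_rhs => rw [Finset.sum_range_succ]
      rw [show (m+1) - (m+1) = 0 by omega, pow_zero, one_mul]
      have hptwise : ∀ j ∈ Finset.range (m + 1),
          (-1:ℤ)^(m + 1 - j) * (c j : ℤ) = -((-1:ℤ)^(m - j) * (c j : ℤ)) := by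
        intro j hj
        rw [Finset.mem_range] at hj
        rw [show m + 1 - j = (m - j) + 1 by omega, pow_succ]
        ring
      rw [Finset.sum_congr rfl hptwise]
      rw [Finset.sum_neg_distrib]
      push_cast
      ring
  have hfin := claim (s + 1) le_rfl
  have hsum := gamma_hsum (r := s + 4) hr
  have e1 : ∀ i ∈ Finset.range (s + 2),
      (-1:ℤ)^(s + 4 - 2 - i) * (c i : ℤ) = -((-1:ℤ)^(s + 1 - i) * (c i : ℤ)) := by
    intro i hi
    rw [Finset.mem_range] at hi
    rw [show s + 4 - 2 - i = (s + 1 - i) + 1 by omega, pow_succ]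
    ring
  rw [show s + 4 - 1 = (s + 2) + 1 by omega, Finset.sum_range_succ,
    show s + 4 - 2 - (s + 2) = 0 by omega, pow_zero, one_mul] at hsum
  rw [Finset.sum_congr rfl e1, Finset.sum_neg_distrib, ← hfin] at hsum
  have hlast : rk (s + 1) + nu (s + 1) = c (s + 2) := by
    have := hrn (s + 1)
    rwa [show s + 1 + 1 = s + 2 by omega] at this
  have hsum2 : -((rk (s + 1) : ℤ)) + (c (s + 2) : ℤ) = -1 := hsum
  omega

end Final

/-- The link complex `Γ` associated to a chordless `r`-cycle (`r ≥ 4`), whose facets are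
the complements of the non-adjacent vertex pairs of the cycle, is pure of dimension
`r-3`, contains every vertex subset of cardinality at most `r-3`, has exactly
`r(r-3)/2` facets, has top `h`-vector entry `h_{r-2} = -1`, and hence is not
Cohen–Macaulay over any field. -/
theorem cycle_link_complex_not_CM (r : ℕ) (hr : 4 ≤ r) :
    IsPure (GammaC r) (r - 2) ∧
    (∀ F : Finset (Fin r), F.card ≤ r - 3 → F ∈ GammaC r) ∧
    (facetSet (GammaC r)).ncard = r * (r - 3) / 2 ∧
    (∑ i ∈ Finset.range (r - 1), (-1 : ℤ) ^ (r - 2 - i) * (faceCount (GammaC r) i : ℤ))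
      = -1 ∧
    ∀ (K : Type) (_ : Field K), ¬ IsCMComplex K (GammaC r) := by
  haveI : NeZero r := ⟨by omega⟩
  refine ⟨gamma_pure hr, fun F hF => low_mem_gamma hr hF, ?_, gamma_hsum hr,
    fun 𝕂 h𝕂 => @gamma_not_CM r hr 𝕂 h𝕂⟩
  rw [facetSet_eq hr, Set.ncard_coe_finset, Finset.card_image_of_injective _ compl_injective,
    card_nonEdgeF hr, choose_sub_arith hr]
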